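/- For the embedding X_I = α_I + α̃_I η₁η₂, Θᵢ = σ_{ij}ηⱼ of ℂ^{0|2} into ℙ^{1|2}, the Berezin integral M(P)_{kl} = ∫∏dηᵢdη̄ᵢ [iΘ_kΘ̄_l / (|X₀|²+|X₁|²+iΣⱼΘⱼΘ̄ⱼ)] equals λδ_{kl} with λ = |det σ|²/(Σᵢ|αᵢ|²)², i.e., the su(N)-block of the moment map is automatically proportional to the identity. -/

import Mathlib

open ComplexConjugate

set_option maxHeartbeats 2000000

noncomputable section

/-- The Grassmann algebra over `ℂ` on the four odd generators `η₁, η₂, η̄₁, η̄₂`. -/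
abbrev G4 := ExteriorAlgebra ℂ (Fin 4 → ℂ)

/-- The `i`-th odd generator. -/
def gen (i : Fin 4) : G4 := ExteriorAlgebra.ι ℂ (Pi.single i 1)

/-- The odd generators `η₁, η₂`. -/
def η (i : Fin 2) : G4 := gen ⟨i.val, by omega⟩

/-- The conjugate odd generators `η̄₁, η̄₂`. -/
def ηb (i : Fin 2) : G4 := gen ⟨i.val + 2, by omega⟩

/-- The `k`-th graded piece (span of `k`-fold products of generators) of `G4`. -/
def gradedPiece (k : ℕ) : Submodule ℂ G4 :=
  LinearMap.range (ExteriorAlgebra.ι ℂ : (Fin 4 → ℂ) →ₗ[ℂ] G4) ^ k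

lemma gen_sq (i : Fin 4) : gen i * gen i = 0 := ExteriorAlgebra.ι_sq_zero _

lemma gen_anticomm (i j : Fin 4) : gen i * gen j = -(gen j * gen i) := by
  have h := ExteriorAlgebra.ι_sq_zero (R := ℂ) (M := Fin 4 → ℂ)
    (Pi.single i (1:ℂ) + Pi.single j 1)
  rw [map_add, add_mul, mul_add, mul_add, ExteriorAlgebra.ι_sq_zero,
    ExteriorAlgebra.ι_sq_zero] at h
  have h2 : gen i * gen j + gen j * gen i = 0 := by
    unfold gen; rw [← h]; abel
  rw [eq_neg_iff_add_eq_zero, h2]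

lemma mem2 (i j : Fin 4) : gen i * gen j ∈ gradedPiece 2 := by
  unfold gradedPiece
  rw [pow_two]
  exact Submodule.mul_mem_mul (LinearMap.mem_range_self _ _) (LinearMap.mem_range_self _ _)

lemma eta_sq (i : Fin 2) : η i * η i = 0 := gen_sq _
lemma etab_sq (i : Fin 2) : ηb i * ηb i = 0 := gen_sq _
lemma eta_sq' (i : Fin 2) (x : G4) : η i * (η i * x) = 0 := by
  rw [← mul_assoc, eta_sq, zero_mul]
lemma etab_sq' (i : Fin 2) (x : G4) : ηb i * (ηb i * x) = 0 := by
  rw [← mul_assoc, etab_sq, zero_mul]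
lemma etab_eta (j i : Fin 2) : ηb j * η i = -(η i * ηb j) := gen_anticomm _ _
lemma etab_eta' (j i : Fin 2) (x : G4) : ηb j * (η i * x) = -(η i * (ηb j * x)) := by
  rw [← mul_assoc, etab_eta, neg_mul, mul_assoc]
lemma eta10 : η 1 * η 0 = -(η 0 * η 1) := gen_anticomm _ _
lemma eta10' (x : G4) : η 1 * (η 0 * x) = -(η 0 * (η 1 * x)) := by
  rw [← mul_assoc, eta10, neg_mul, mul_assoc]
lemma etab10 : ηb 1 * ηb 0 = -(ηb 0 * ηb 1) := gen_anticomm _ _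
lemma etab10' (x : G4) : ηb 1 * (ηb 0 * x) = -(ηb 0 * (ηb 1 * x)) := by
  rw [← mul_assoc, etab10, neg_mul, mul_assoc]

/-- top monomial in normal order -/
def ω : G4 := η 0 * (η 1 * (ηb 0 * ηb 1))

def Dexp (u a A B C : ℂ) (H : Fin 2 → Fin 2 → ℂ) : G4 :=
  a • (1:G4) + B • (η 0 * η 1) + A • (ηb 0 * ηb 1)
    + u • (∑ m : Fin 2, ∑ n : Fin 2, H m n • (η m * ηb n)) + C • ω

def Qexp (u a A B C : ℂ) (H : Fin 2 → Fin 2 → ℂ) : G4 :=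
  (a * a) • (1:G4) - a • (B • (η 0 * η 1) + A • (ηb 0 * ηb 1)
      + u • (∑ m : Fin 2, ∑ n : Fin 2, H m n • (η m * ηb n)))
  + (-(a * C) + 2*A*B - 2*u*u*(H 0 0 * H 1 1 - H 0 1 * H 1 0)) • ω

lemma key_inverse (u a A B C : ℂ) (H : Fin 2 → Fin 2 → ℂ) :
    Dexp u a A B C H * Qexp u a A B C H = (a * a * a) • 1 := by
  simp only [Dexp, Qexp, ω, Fin.sum_univ_two, smul_add, sub_eq_add_neg, neg_smul,
    mul_add, add_mul, smul_mul_assoc, mul_smul_comm, smul_smul, mul_one, one_mul,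
    mul_assoc, neg_mul, mul_neg, smul_neg, neg_neg, mul_zero, zero_mul, smul_zero,
    eta_sq, eta_sq', etab_sq, etab_sq', etab_eta, etab_eta', eta10, eta10',
    etab10, etab10']
  match_scalars <;> ring1

lemma key_inverse' (u a A B C : ℂ) (H : Fin 2 → Fin 2 → ℂ) :
    Qexp u a A B C H * Dexp u a A B C H = (a * a * a) • 1 := by
  simp only [Dexp, Qexp, ω, Fin.sum_univ_two, smul_add, sub_eq_add_neg, neg_smul,
    mul_add, add_mul, smul_mul_assoc, mul_smul_comm, smul_smul, mul_one, one_mul,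
    mul_assoc, neg_mul, mul_neg, smul_neg, neg_neg, mul_zero, zero_mul, smul_zero,
    eta_sq, eta_sq', etab_sq, etab_sq', etab_eta, etab_eta', eta10, eta10',
    etab10, etab10']
  match_scalars <;> ring1

lemma key_prod (u a A B C : ℂ) (H : Fin 2 → Fin 2 → ℂ) (sk tl : Fin 2 → ℂ) :
    Qexp u a A B C H * (u • ((∑ m : Fin 2, sk m • η m) * (∑ n : Fin 2, tl n • ηb n)))
      = (∑ m : Fin 2, ∑ n : Fin 2, (a * a * u * sk m * tl n) • (η m * ηb n))
        + (a * u * u * (sk 0 * tl 0 * H 1 1 - sk 0 * tl 1 * H 1 0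
            - sk 1 * tl 0 * H 0 1 + sk 1 * tl 1 * H 0 0)) • ω := by
  simp only [Qexp, ω, Fin.sum_univ_two, smul_add, sub_eq_add_neg, neg_smul,
    mul_add, add_mul, smul_mul_assoc, mul_smul_comm, smul_smul, mul_one, one_mul,
    mul_assoc, neg_mul, mul_neg, smul_neg, neg_neg, mul_zero, zero_mul, smul_zero,
    eta_sq, eta_sq', etab_sq, etab_sq', etab_eta, etab_eta', eta10, eta10',
    etab10, etab10']
  match_scalars <;> ring1


/-- For the embedding `X_I = α_I + α̃_I η₁η₂`, `Θᵢ = σ_{ij} ηⱼ` of `ℂ^{0|2}` into `ℙ^{1|2}`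
(with bodies `(α₀, α₁) ≠ 0`), the Berezin integral
`M(P)_{kl} = ∫∏dηᵢdη̄ᵢ [iΘ_kΘ̄_l / (|X₀|²+|X₁|²+iΣⱼΘⱼΘ̄ⱼ)]` equals `λ δ_{kl}` with
`λ = |det σ|²/(Σᵢ|αᵢ|²)²`: the `su(N)`-block of the moment map is automatically
proportional to the identity.  `BerInt` is the Berezin integral (linear, vanishing in
degree `< 4`, normalized on the top monomial), `c` the Grassmann conjugation. -/
theorem su_block_automatically_balanced (BerInt : G4 →ₗ[ℂ] ℂ)
    (hBer_low : ∀ k : ℕ, k < 4 → ∀ x ∈ gradedPiece k, BerInt x = 0)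
    (hBer_top : BerInt (η 0 * ηb 0 * η 1 * ηb 1) = 1)
    (c : G4 →+ G4)
    (hc_mul : ∀ x y : G4, c (x * y) = c x * c y)
    (hc_alg : ∀ z : ℂ, c (algebraMap ℂ G4 z) = algebraMap ℂ G4 (starRingEnd ℂ z))
    (hc_η : ∀ i : Fin 2, c (η i) = ηb i) (hc_ηb : ∀ i : Fin 2, c (ηb i) = η i)
    (α at' : Fin 2 → ℂ) (hα : α ≠ 0) (σ : Matrix (Fin 2) (Fin 2) ℂ) :
    let X : Fin 2 → G4 := fun I => algebraMap ℂ G4 (α I) + at' I • (η 0 * η 1)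
    let Θ : Fin 2 → G4 := fun i => ∑ j, σ i j • η j
    let D : G4 := X 0 * c (X 0) + X 1 * c (X 1)
      + Complex.I • (Θ 0 * c (Θ 0) + Θ 1 * c (Θ 1))
    ∀ k l : Fin 2,
      BerInt (Ring.inverse D * (Complex.I • (Θ k * c (Θ l))))
        = if k = l then
            ((Complex.normSq σ.det : ℂ)
              / ((Complex.normSq (α 0) + Complex.normSq (α 1) : ℂ)) ^ 2)
          else 0 := by
  intro X Θ D k l
  set a : ℂ := (Complex.normSq (α 0) : ℂ) + (Complex.normSq (α 1) : ℂ) with ha_def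
  have ha : a ≠ 0 := by
    intro h
    apply hα
    have h0 : Complex.normSq (α 0) + Complex.normSq (α 1) = 0 := by
      have := congrArg Complex.re h
      simpa [ha_def] using this
    have e0 : Complex.normSq (α 0) = 0 := by
      nlinarith [Complex.normSq_nonneg (α 0), Complex.normSq_nonneg (α 1)]
    have e1 : Complex.normSq (α 1) = 0 := by
      nlinarith [Complex.normSq_nonneg (α 0), Complex.normSq_nonneg (α 1)]
    funext i
    fin_cases i
    · simpa using Complex.normSq_eq_zero.mp e0
    · simpa using Complex.normSq_eq_zero.mp e1
  have hc_one : c 1 = 1 := by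
    have := hc_alg 1
    simpa using this
  have hc_smul : ∀ (z : ℂ) (x : G4), c (z • x) = conj z • c x := by
    intro z x
    rw [Algebra.smul_def, hc_mul, hc_alg, ← Algebra.smul_def]
  have hcX : ∀ I : Fin 2, c (X I) = conj (α I) • (1:G4) + conj (at' I) • (ηb 0 * ηb 1) := by
    intro I
    simp only [X, map_add, hc_alg, hc_smul, hc_mul, hc_η, hc_one,
      Algebra.algebraMap_eq_smul_one]
  have hcΘ : ∀ i : Fin 2, c (Θ i) = ∑ j : Fin 2, conj (σ i j) • ηb j := by
    intro i
    simp only [Θ, map_sum, hc_smul, hc_η]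
  have hD : D = Dexp Complex.I a
      (α 0 * conj (at' 0) + α 1 * conj (at' 1))
      (at' 0 * conj (α 0) + at' 1 * conj (α 1))
      (at' 0 * conj (at' 0) + at' 1 * conj (at' 1))
      (fun m n => σ 0 m * conj (σ 0 n) + σ 1 m * conj (σ 1 n)) := by
    unfold D
    simp only [hcX, hcΘ]
    unfold X Θ
    simp only [Dexp, ω, Fin.sum_univ_two, smul_add, mul_add, add_mul,
      smul_mul_assoc, mul_smul_comm, smul_smul, mul_one, one_mul, mul_assoc,
      neg_mul, mul_neg, smul_neg, neg_neg, mul_zero, zero_mul, smul_zero,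
      Algebra.algebraMap_eq_smul_one,
      eta_sq, eta_sq', etab_sq, etab_sq', etab_eta, etab_eta', eta10, eta10',
      etab10, etab10']
    match_scalars <;> (try simp only [ha_def, Complex.normSq_eq_conj_mul_self]) <;> ring1
  have hsc : (a⁻¹ * a⁻¹ * a⁻¹) * (a * a * a) = 1 := by
    field_simp
  have hQ1 : Dexp Complex.I a
      (α 0 * conj (at' 0) + α 1 * conj (at' 1))
      (at' 0 * conj (α 0) + at' 1 * conj (α 1))
      (at' 0 * conj (at' 0) + at' 1 * conj (at' 1))
      (fun m n => σ 0 m * conj (σ 0 n) + σ 1 m * conj (σ 1 n))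
      * ((a⁻¹ * a⁻¹ * a⁻¹) • Qexp Complex.I a
      (α 0 * conj (at' 0) + α 1 * conj (at' 1))
      (at' 0 * conj (α 0) + at' 1 * conj (α 1))
      (at' 0 * conj (at' 0) + at' 1 * conj (at' 1))
      (fun m n => σ 0 m * conj (σ 0 n) + σ 1 m * conj (σ 1 n))) = 1 := by
    rw [mul_smul_comm, key_inverse, smul_smul, hsc, one_smul]
  have hQ2 : ((a⁻¹ * a⁻¹ * a⁻¹) • Qexp Complex.I a
      (α 0 * conj (at' 0) + α 1 * conj (at' 1))
      (at' 0 * conj (α 0) + at' 1 * conj (α 1))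
      (at' 0 * conj (at' 0) + at' 1 * conj (at' 1))
      (fun m n => σ 0 m * conj (σ 0 n) + σ 1 m * conj (σ 1 n)))
      * Dexp Complex.I a
      (α 0 * conj (at' 0) + α 1 * conj (at' 1))
      (at' 0 * conj (α 0) + at' 1 * conj (α 1))
      (at' 0 * conj (at' 0) + at' 1 * conj (at' 1))
      (fun m n => σ 0 m * conj (σ 0 n) + σ 1 m * conj (σ 1 n)) = 1 := by
    rw [smul_mul_assoc, key_inverse', smul_smul, hsc, one_smul]
  have hinv : Ring.inverse D = (a⁻¹ * a⁻¹ * a⁻¹) • Qexp Complex.I a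
      (α 0 * conj (at' 0) + α 1 * conj (at' 1))
      (at' 0 * conj (α 0) + at' 1 * conj (α 1))
      (at' 0 * conj (at' 0) + at' 1 * conj (at' 1))
      (fun m n => σ 0 m * conj (σ 0 n) + σ 1 m * conj (σ 1 n)) := by
    rw [hD]
    exact Ring.inverse_unit (Units.mk _ _ hQ1 hQ2)
  have hBer2 : ∀ m n : Fin 2, BerInt (η m * ηb n) = 0 := by
    intro m n
    exact hBer_low 2 (by norm_num) _ (mem2 ⟨m.1, by omega⟩ ⟨n.1 + 2, by omega⟩)
  have hBerω : BerInt ω = -1 := by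
    have h : η 0 * ηb 0 * η 1 * ηb 1 = -ω := by
      simp only [ω, mul_assoc, etab_eta', etab_eta, mul_neg, neg_neg, neg_mul]
    rw [h, map_neg] at hBer_top
    linear_combination -hBer_top
  rw [hinv, smul_mul_assoc]
  simp only [hcΘ]
  unfold Θ
  rw [key_prod]
  rw [map_smul]
  simp only [Fin.sum_univ_two, map_add, map_smul, hBer2, hBerω, smul_eq_mul,
    mul_zero, add_zero, zero_add, mul_neg, mul_one]
  fin_cases k <;> fin_cases l <;>
    simp only [Fin.mk_one, Fin.zero_eta, Fin.isValue, zero_ne_one, one_ne_zero, reduceIte, Matrix.det_fin_two,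
      Complex.normSq_eq_conj_mul_self, map_sub, map_mul] <;>
    field_simp <;>
    ring_nf <;>
    (try simp only [Complex.I_sq]) <;>
    (try ring_nf)

end
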